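/- arXiv:2109.02393 — 2 statements merged into one kernel-verified Lean document; each statement's English description precedes it below -/
import Mathlib

section
/- Let 0 < λ < 1. For every m > 0, the infimum E_λ(m) of the one-dimensional generalized liquid drop energy 𝓔_λ[Ω] = 2K + (1/2)∬_{Ω×Ω} |x−y|^{−λ} dx dy, taken over all sets Ω ⊂ ℝ that are finite unions of K ≥ 1 nonempty bounded open intervals with pairwise disjoint closures and with Lebesgue measure |Ω| = m, equals the infimum over integers K ≥ 1 of the quantity 2K + K^{λ−1} m^{2−λ}/((1−λ)(2−λ)). -/
open MeasureTheory Set ENNReal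

/-- The Riesz self-interaction energy `(1/2)∬_{Ω×Ω} |x-y|^{-λ} dx dy` of a set `Ω ⊆ ℝ`. -/
noncomputable def rieszEnergy1d (lam : ℝ) (Ω : Set ℝ) : ℝ :=
  (1 / 2) * ∫ x in Ω, ∫ y in Ω, |x - y| ^ (-lam)


variable {lam : ℝ}

lemma II_abs (hlam0 : 0 < lam) (hlam1 : lam < 1) (x c d : ℝ) :
    IntervalIntegrable (fun y => |x - y| ^ (-lam)) volume c d := by
  have hr : (-1:ℝ) < -lam := by linarith
  have key : ∀ u : ℝ, IntervalIntegrable (fun y => |x - y| ^ (-lam)) volume x u := by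
    intro u
    rcases le_total x u with h | h
    · have h1 : IntervalIntegrable (fun y => (y - x) ^ (-lam)) volume x u := by
        simpa using (intervalIntegral.intervalIntegrable_rpow' hr (a := 0) (b := u - x)).comp_sub_right x
      rw [intervalIntegrable_iff_integrableOn_Ioc_of_le h] at h1 ⊢
      refine h1.congr_fun (fun y hy => ?_) measurableSet_Ioc
      rw [abs_sub_comm, abs_of_nonneg (by linarith [hy.1.le] : (0:ℝ) ≤ y - x)]
    · have h1 : IntervalIntegrable (fun y => (x - y) ^ (-lam)) volume x u := by
        simpa using (intervalIntegral.intervalIntegrable_rpow' hr (a := 0) (b := x - u)).comp_sub_left x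
      have h1' := h1.symm
      rw [intervalIntegrable_iff_integrableOn_Ioc_of_le h] at h1'
      refine IntervalIntegrable.symm ?_
      rw [intervalIntegrable_iff_integrableOn_Ioc_of_le h]
      refine h1'.congr_fun (fun y hy => ?_) measurableSet_Ioc
      rw [abs_of_nonneg (by linarith [hy.2] : (0:ℝ) ≤ x - y)]
  exact (key c).symm.trans (key d)

lemma inner_val (hlam0 : 0 < lam) (hlam1 : lam < 1) {x a b : ℝ} (hax : a ≤ x) (hxb : x ≤ b) :
    ∫ y in a..b, |x - y| ^ (-lam) = ((x - a) ^ (1 - lam) + (b - x) ^ (1 - lam)) / (1 - lam) := by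
  have hr : (-1:ℝ) < -lam := by linarith
  have h0 : -lam + 1 = 1 - lam := by ring
  have h1 : ∫ y in a..x, |x - y| ^ (-lam) = (x - a) ^ (1-lam) / (1-lam) := by
    have e1 : ∫ y in a..x, |x - y| ^ (-lam) = ∫ y in a..x, (x - y) ^ (-lam) :=
      intervalIntegral.integral_congr (fun y hy => by
        rw [Set.uIcc_of_le hax] at hy
        rw [abs_of_nonneg (by linarith [hy.2] : (0:ℝ) ≤ x - y)])
    rw [e1, intervalIntegral.integral_comp_sub_left (fun t => t ^ (-lam)) x, sub_self,
      integral_rpow (Or.inl hr), Real.zero_rpow (by linarith : -lam + 1 ≠ 0), h0]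
    ring
  have h2 : ∫ y in x..b, |x - y| ^ (-lam) = (b - x) ^ (1-lam) / (1-lam) := by
    have e1 : ∫ y in x..b, |x - y| ^ (-lam) = ∫ y in x..b, (y - x) ^ (-lam) :=
      intervalIntegral.integral_congr (fun y hy => by
        rw [Set.uIcc_of_le hxb] at hy
        rw [abs_sub_comm, abs_of_nonneg (by linarith [hy.1] : (0:ℝ) ≤ y - x)])
    rw [e1, intervalIntegral.integral_comp_sub_right (fun t => t ^ (-lam)) x, sub_self,
      integral_rpow (Or.inl hr), Real.zero_rpow (by linarith : -lam + 1 ≠ 0), h0]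
    ring
  rw [← intervalIntegral.integral_add_adjacent_intervals (II_abs hlam0 hlam1 x a x) (II_abs hlam0 hlam1 x x b),
    h1, h2]
  ring

lemma II_pow_left (hlam1 : lam < 1) (a c d : ℝ) :
    IntervalIntegrable (fun x => (x - a) ^ (1 - lam)) volume c d := by
  have hr : (-1:ℝ) < 1 - lam := by linarith
  simpa using (intervalIntegral.intervalIntegrable_rpow' hr (a := c - a) (b := d - a)).comp_sub_right a

lemma II_pow_right (hlam1 : lam < 1) (b c d : ℝ) :
    IntervalIntegrable (fun x => (b - x) ^ (1 - lam)) volume c d := by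
  have hr : (-1:ℝ) < 1 - lam := by linarith
  simpa using (intervalIntegral.intervalIntegrable_rpow' hr (a := b - c) (b := b - d)).comp_sub_left b

lemma self_val (hlam0 : 0 < lam) (hlam1 : lam < 1) {a b : ℝ} :
    ∫ x in a..b, ((x - a) ^ (1 - lam) + (b - x) ^ (1 - lam)) / (1 - lam)
      = 2 * (b - a) ^ (2 - lam) / ((1 - lam) * (2 - lam)) := by
  have hr : (-1:ℝ) < 1 - lam := by linarith
  have h0 : (1:ℝ) - lam + 1 = 2 - lam := by ring
  have hA : ∫ x in a..b, (x - a) ^ (1 - lam) = (b - a) ^ (2 - lam) / (2 - lam) := by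
    rw [intervalIntegral.integral_comp_sub_right (fun t => t ^ (1 - lam)) a, sub_self,
      integral_rpow (Or.inl hr), Real.zero_rpow (by linarith : (1:ℝ) - lam + 1 ≠ 0), h0]
    ring
  have hB : ∫ x in a..b, (b - x) ^ (1 - lam) = (b - a) ^ (2 - lam) / (2 - lam) := by
    rw [intervalIntegral.integral_comp_sub_left (fun t => t ^ (1 - lam)) b, sub_self,
      integral_rpow (Or.inl hr), Real.zero_rpow (by linarith : (1:ℝ) - lam + 1 ≠ 0), h0]
    ring
  rw [intervalIntegral.integral_div, intervalIntegral.integral_add (II_pow_left hlam1 a a b)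
    (II_pow_right hlam1 b a b), hA, hB]
  field_simp
  ring

lemma ker_nonneg (lam x y : ℝ) : 0 ≤ |x - y| ^ (-lam) := Real.rpow_nonneg (abs_nonneg _) _

lemma meas_rpow_abs (hlam0 : 0 < lam) : Measurable fun t : ℝ => |t| ^ (-lam) := by
  have h : ∀ t : ℝ, |t| ^ (-lam) = if t = 0 then 0 else Real.exp (Real.log |t| * (-lam)) := by
    intro t
    by_cases ht : t = 0
    · simp [ht, Real.zero_rpow (by simpa using hlam0.ne' : -lam ≠ 0)]
    · rw [if_neg ht, Real.rpow_def_of_pos (abs_pos.2 ht)]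
  simp_rw [h]
  exact Measurable.ite (measurableSet_eq) measurable_const
    (Real.measurable_exp.comp ((Real.measurable_log.comp measurable_abs).mul_const (-lam)))

lemma ker_meas (hlam0 : 0 < lam) :
    Measurable (fun p : ℝ × ℝ => ENNReal.ofReal (|p.1 - p.2| ^ (-lam))) :=
  ENNReal.measurable_ofReal.comp
    ((meas_rpow_abs hlam0).comp (measurable_fst.sub measurable_snd))

lemma lint_eq_ofReal {s : Set ℝ} {x : ℝ}
    (hfi : IntegrableOn (fun y => |x - y| ^ (-lam)) s) :
    ∫⁻ y in s, ENNReal.ofReal (|x - y| ^ (-lam)) = ENNReal.ofReal (∫ y in s, |x - y| ^ (-lam)) :=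
  (ofReal_integral_eq_lintegral_ofReal hfi (ae_of_all _ fun y => ker_nonneg lam x y)).symm

lemma H_bound (hlam0 : 0 < lam) (hlam1 : lam < 1) {Ω : Set ℝ} {c d x : ℝ}
    (hcd : c ≤ d) (hΩ : Ω ⊆ Icc c d) (hx : x ∈ Icc c d) :
    ∫⁻ y in Ω, ENNReal.ofReal (|x - y| ^ (-lam))
      ≤ ENNReal.ofReal (2 * (d - c) ^ (1 - lam) / (1 - lam)) := by
  have hL : (0:ℝ) ≤ d - c := by linarith
  have hsub : Ω ⊆ Icc (x - (d - c)) (x + (d - c)) := fun y hy =>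
    ⟨by have h1 := (hΩ hy).1; have h2 := hx.2; linarith,
     by have h1 := (hΩ hy).2; have h2 := hx.1; linarith⟩
  refine le_trans (lintegral_mono_set hsub) ?_
  have hle : x - (d - c) ≤ x + (d - c) := by linarith
  have hfi : IntegrableOn (fun y => |x - y| ^ (-lam)) (Icc (x - (d-c)) (x + (d-c))) := by
    rw [← intervalIntegrable_iff_integrableOn_Icc_of_le hle]
    exact II_abs hlam0 hlam1 x _ _
  rw [lint_eq_ofReal hfi]
  apply ENNReal.ofReal_le_ofReal
  rw [integral_Icc_eq_integral_Ioc, ← intervalIntegral.integral_of_le hle,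
    inner_val hlam0 hlam1 (by linarith) (by linarith)]
  have e1 : x - (x - (d - c)) = d - c := by ring
  have e2 : x + (d - c) - x = d - c := by ring
  rw [e1, e2]
  ring_nf
  exact le_refl _

lemma energy_repr (hlam0 : 0 < lam) (hlam1 : lam < 1) {Ω : Set ℝ} {c d : ℝ}
    (hcd : c ≤ d) (hΩm : MeasurableSet Ω) (hΩ : Ω ⊆ Icc c d) :
    rieszEnergy1d lam Ω
      = (1/2) * (∫⁻ x in Ω, ∫⁻ y in Ω, ENNReal.ofReal (|x - y| ^ (-lam))).toReal := by
  set H : ℝ → ℝ≥0∞ := fun x => ∫⁻ y in Ω, ENNReal.ofReal (|x - y| ^ (-lam)) with hH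
  have hHmeas : Measurable H := (ker_meas hlam0).lintegral_prod_right'
  have hfin : ∀ x ∈ Icc c d, H x ≠ ⊤ := fun x hx =>
    ((H_bound hlam0 hlam1 hcd hΩ hx).trans_lt ofReal_lt_top).ne
  have step1 : ∀ x : ℝ, (∫ y in Ω, |x - y| ^ (-lam)) = (H x).toReal := fun x =>
    integral_eq_lintegral_of_nonneg_ae (ae_of_all _ (ker_nonneg lam x))
      (((meas_rpow_abs hlam0).comp (measurable_const.sub measurable_id)).aestronglyMeasurable)
  have step2 : ∫ x in Ω, (H x).toReal = (∫⁻ x in Ω, ENNReal.ofReal ((H x).toReal)).toReal :=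
    integral_eq_lintegral_of_nonneg_ae (ae_of_all _ fun x => ENNReal.toReal_nonneg)
      hHmeas.ennreal_toReal.aestronglyMeasurable
  have step3 : ∫⁻ x in Ω, ENNReal.ofReal ((H x).toReal) = ∫⁻ x in Ω, H x :=
    setLIntegral_congr_fun_ae hΩm (ae_of_all _ fun x hxΩ => ENNReal.ofReal_toReal (hfin x (hΩ hxΩ)))
  unfold rieszEnergy1d
  simp_rw [step1]
  rw [step2, step3]

lemma T_ne_top (hlam0 : 0 < lam) (hlam1 : lam < 1) {Ω : Set ℝ} {c d : ℝ}
    (hcd : c ≤ d) (hΩ : Ω ⊆ Icc c d) :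
    (∫⁻ x in Ω, ∫⁻ y in Ω, ENNReal.ofReal (|x - y| ^ (-lam))) ≠ ⊤ := by
  have h1 : (∫⁻ x in Ω, ∫⁻ y in Ω, ENNReal.ofReal (|x - y| ^ (-lam)))
      ≤ ∫⁻ _ in Ω, ENNReal.ofReal (2 * (d - c) ^ (1 - lam) / (1 - lam)) :=
    setLIntegral_mono measurable_const (fun x hx => H_bound hlam0 hlam1 hcd hΩ (hΩ hx))
  rw [setLIntegral_const] at h1
  refine (h1.trans_lt ?_).ne
  have h2 : volume Ω ≤ ENNReal.ofReal (d - c) :=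
    (measure_mono hΩ).trans (le_of_eq Real.volume_Icc)
  exact ENNReal.mul_lt_top ofReal_lt_top (h2.trans_lt ofReal_lt_top)

lemma split_lintegral (hlam0 : 0 < lam) {K : ℕ} (a b : Fin K → ℝ)
    (hdisj : Pairwise fun i j : Fin K => Disjoint (Ioo (a i) (b i)) (Ioo (a j) (b j))) :
    ∫⁻ x in ⋃ i, Ioo (a i) (b i), ∫⁻ y in ⋃ i, Ioo (a i) (b i),
        ENNReal.ofReal (|x - y| ^ (-lam))
      = ∑ i : Fin K, ∑ j : Fin K, ∫⁻ x in Ioo (a i) (b i), ∫⁻ y in Ioo (a j) (b j),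
          ENNReal.ofReal (|x - y| ^ (-lam)) := by
  have hms : ∀ i, MeasurableSet (Ioo (a i) (b i)) := fun i => measurableSet_Ioo
  have hinner : ∀ x : ℝ, ∫⁻ y in ⋃ i, Ioo (a i) (b i), ENNReal.ofReal (|x - y| ^ (-lam))
      = ∑ j : Fin K, ∫⁻ y in Ioo (a j) (b j), ENNReal.ofReal (|x - y| ^ (-lam)) := by
    intro x
    rw [lintegral_iUnion hms hdisj]
    exact tsum_fintype _
  calc ∫⁻ x in ⋃ i, Ioo (a i) (b i), ∫⁻ y in ⋃ i, Ioo (a i) (b i),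
        ENNReal.ofReal (|x - y| ^ (-lam))
      = ∫⁻ x in ⋃ i, Ioo (a i) (b i), ∑ j : Fin K, ∫⁻ y in Ioo (a j) (b j),
          ENNReal.ofReal (|x - y| ^ (-lam)) := lintegral_congr hinner
    _ = ∑ j : Fin K, ∫⁻ x in ⋃ i, Ioo (a i) (b i), ∫⁻ y in Ioo (a j) (b j),
          ENNReal.ofReal (|x - y| ^ (-lam)) :=
        lintegral_finset_sum _ (fun j _ => (ker_meas hlam0).lintegral_prod_right')
    _ = ∑ j : Fin K, ∑ i : Fin K, ∫⁻ x in Ioo (a i) (b i), ∫⁻ y in Ioo (a j) (b j),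
          ENNReal.ofReal (|x - y| ^ (-lam)) := by
        refine Finset.sum_congr rfl (fun j _ => ?_)
        rw [lintegral_iUnion hms hdisj]
        exact tsum_fintype _
    _ = _ := Finset.sum_comm

lemma diag_val (hlam0 : 0 < lam) (hlam1 : lam < 1) {a b : ℝ} (hab : a < b) :
    ∫⁻ x in Ioo a b, ∫⁻ y in Ioo a b, ENNReal.ofReal (|x - y| ^ (-lam))
      = ENNReal.ofReal (2 * (b - a) ^ (2 - lam) / ((1 - lam) * (2 - lam))) := by
  have hfi : ∀ x : ℝ, IntegrableOn (fun y => |x - y| ^ (-lam)) (Ioo a b) := fun x => by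
    have h := II_abs hlam0 hlam1 x a b
    rw [intervalIntegrable_iff_integrableOn_Ioc_of_le hab.le] at h
    exact h.mono_set Ioo_subset_Ioc_self
  have step1 : ∀ᵐ x ∂volume, x ∈ Ioo a b → (∫⁻ y in Ioo a b, ENNReal.ofReal (|x - y| ^ (-lam)))
      = ENNReal.ofReal (((x - a) ^ (1 - lam) + (b - x) ^ (1 - lam)) / (1 - lam)) := by
    refine ae_of_all _ (fun x hx => ?_)
    rw [lint_eq_ofReal (hfi x)]
    congr 1
    rw [← integral_Ioc_eq_integral_Ioo, ← intervalIntegral.integral_of_le hab.le,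
      inner_val hlam0 hlam1 hx.1.le hx.2.le]
  rw [setLIntegral_congr_fun_ae measurableSet_Ioo step1]
  have hφi : IntegrableOn (fun x => ((x - a) ^ (1 - lam) + (b - x) ^ (1 - lam)) / (1 - lam))
      (Ioo a b) := by
    have h : IntervalIntegrable
        (fun x => ((x - a) ^ (1 - lam) + (b - x) ^ (1 - lam)) / (1 - lam)) volume a b :=
      ((II_pow_left hlam1 a a b).add (II_pow_right hlam1 b a b)).div_const _
    rw [intervalIntegrable_iff_integrableOn_Ioc_of_le hab.le] at h
    exact h.mono_set Ioo_subset_Ioc_self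
  have hφnn : 0 ≤ᵐ[volume.restrict (Ioo a b)]
      fun x => ((x - a) ^ (1 - lam) + (b - x) ^ (1 - lam)) / (1 - lam) := by
    refine (ae_restrict_iff' measurableSet_Ioo).2 (ae_of_all _ fun x hx => ?_)
    have h1 : (0:ℝ) ≤ (x - a) ^ (1 - lam) := Real.rpow_nonneg (by linarith [hx.1]) _
    have h2 : (0:ℝ) ≤ (b - x) ^ (1 - lam) := Real.rpow_nonneg (by linarith [hx.2]) _
    have h3 : (0:ℝ) < 1 - lam := by linarith
    exact div_nonneg (by linarith) h3.le
  rw [← ofReal_integral_eq_lintegral_ofReal hφi hφnn, ← integral_Ioc_eq_integral_Ioo,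
    ← intervalIntegral.integral_of_le hab.le, self_val hlam0 hlam1]

lemma vol_union {K : ℕ} (a b : Fin K → ℝ) (hab : ∀ i, a i < b i)
    (hdisj : Pairwise fun i j : Fin K => Disjoint (Ioo (a i) (b i)) (Ioo (a j) (b j))) :
    volume (⋃ i, Ioo (a i) (b i)) = ENNReal.ofReal (∑ i, (b i - a i)) := by
  rw [measure_iUnion hdisj (fun i => measurableSet_Ioo), tsum_fintype]
  simp_rw [Real.volume_Ioo]
  rw [← ENNReal.ofReal_sum_of_nonneg (fun i _ => by linarith [hab i])]

lemma convexity_bound (hlam1 : lam < 1) {K : ℕ} (hK : 1 ≤ K) (ℓ : Fin K → ℝ)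
    (hℓ : ∀ i, 0 ≤ ℓ i) :
    (K:ℝ) ^ (lam - 1) * (∑ i, ℓ i) ^ (2 - lam) ≤ ∑ i, (ℓ i) ^ (2 - lam) := by
  have hKpos : (0:ℝ) < K := by exact_mod_cast hK
  have hq : (1:ℝ) ≤ 2 - lam := by linarith
  have hS : (0:ℝ) ≤ ∑ i, ℓ i := Finset.sum_nonneg fun i _ => hℓ i
  have hw : ∑ _i : Fin K, (K:ℝ)⁻¹ = 1 := by
    rw [Finset.sum_const, Finset.card_univ, Fintype.card_fin, nsmul_eq_mul,
      mul_inv_cancel₀ hKpos.ne']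
  have key := Real.rpow_arith_mean_le_arith_mean_rpow Finset.univ (fun _ => (K:ℝ)⁻¹) ℓ
    (fun i _ => by positivity) hw (fun i _ => hℓ i) hq
  rw [← Finset.mul_sum, ← Finset.mul_sum, Real.mul_rpow (by positivity) hS,
    Real.inv_rpow hKpos.le, ← Real.rpow_neg hKpos.le] at key
  have key2 := mul_le_mul_of_nonneg_left key hKpos.le
  have e1 : (K:ℝ) * ((K:ℝ) ^ (-(2-lam)) * (∑ i, ℓ i) ^ (2-lam))
      = (K:ℝ) ^ (lam - 1) * (∑ i, ℓ i) ^ (2-lam) := by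
    rw [← mul_assoc]
    congr 1
    have e2 : (K:ℝ) ^ (lam - 1) = (K:ℝ) ^ ((1:ℝ) + -(2 - lam)) := by ring_nf
    rw [e2, Real.rpow_add hKpos, Real.rpow_one]
  have e3 : (K:ℝ) * ((K:ℝ)⁻¹ * ∑ i, (ℓ i) ^ (2-lam)) = ∑ i, (ℓ i) ^ (2-lam) := by
    rw [← mul_assoc, mul_inv_cancel₀ hKpos.ne', one_mul]
  rw [e1, e3] at key2
  exact key2

lemma energy_lower (hlam0 : 0 < lam) (hlam1 : lam < 1) {m : ℝ} (hm : 0 < m)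
    {K : ℕ} (hK : 1 ≤ K) (a b : Fin K → ℝ) (hab : ∀ i, a i < b i)
    (hdisj : Pairwise fun i j : Fin K => Disjoint (Icc (a i) (b i)) (Icc (a j) (b j)))
    (hvol : volume (⋃ i, Ioo (a i) (b i)) = ENNReal.ofReal m) :
    (K:ℝ) ^ (lam - 1) * m ^ (2 - lam) / ((1 - lam) * (2 - lam))
      ≤ rieszEnergy1d lam (⋃ i, Ioo (a i) (b i)) := by
  have hne : Nonempty (Fin K) := ⟨⟨0, hK⟩⟩
  have huniv : (Finset.univ : Finset (Fin K)).Nonempty := Finset.univ_nonempty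
  set c := Finset.univ.inf' huniv a with hc
  set d := Finset.univ.sup' huniv b with hd
  set Ω := ⋃ i, Ioo (a i) (b i) with hΩdef
  have hdisjIoo : Pairwise fun i j : Fin K => Disjoint (Ioo (a i) (b i)) (Ioo (a j) (b j)) :=
    fun i j hij => (hdisj hij).mono Ioo_subset_Icc_self Ioo_subset_Icc_self
  have hsub : Ω ⊆ Icc c d := by
    intro x hx
    obtain ⟨i, hi⟩ := mem_iUnion.1 hx
    exact ⟨le_trans (Finset.inf'_le a (Finset.mem_univ i)) hi.1.le,
      le_trans hi.2.le (Finset.le_sup' b (Finset.mem_univ i))⟩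
  have hcd : c ≤ d := by
    obtain ⟨i⟩ := hne
    exact le_trans (Finset.inf'_le a (Finset.mem_univ i))
      (le_trans (hab i).le (Finset.le_sup' b (Finset.mem_univ i)))
  have hΩm : MeasurableSet Ω := MeasurableSet.iUnion (fun i => measurableSet_Ioo)
  -- sum of lengths is m
  have hsum : ∑ i, (b i - a i) = m := by
    rw [vol_union a b hab hdisjIoo] at hvol
    exact (ENNReal.ofReal_eq_ofReal_iff
      (Finset.sum_nonneg fun i _ => by linarith [hab i]) hm.le).1 hvol
  -- decomposition and lower bound in ℝ≥0∞
  set T := ∫⁻ x in Ω, ∫⁻ y in Ω, ENNReal.ofReal (|x - y| ^ (-lam)) with hT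
  have hTsplit := split_lintegral hlam0 a b hdisjIoo
  have hTlow : ENNReal.ofReal (∑ i, 2 * (b i - a i) ^ (2 - lam) / ((1 - lam) * (2 - lam))) ≤ T := by
    rw [hT, hTsplit, ENNReal.ofReal_sum_of_nonneg]
    · refine Finset.sum_le_sum (fun i _ => ?_)
      rw [← diag_val hlam0 hlam1 (hab i)]
      exact Finset.single_le_sum (f := fun j => ∫⁻ x in Ioo (a i) (b i), ∫⁻ y in Ioo (a j) (b j),
        ENNReal.ofReal (|x - y| ^ (-lam))) (fun j _ => zero_le) (Finset.mem_univ i)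
    · intro i _
      have h1 : (0:ℝ) ≤ (b i - a i) ^ (2 - lam) := Real.rpow_nonneg (by linarith [hab i]) _
      have h2 : (0:ℝ) < (1 - lam) * (2 - lam) := by nlinarith
      positivity
  have hTne : T ≠ ⊤ := T_ne_top hlam0 hlam1 hcd hsub
  have htr : ∑ i, 2 * (b i - a i) ^ (2 - lam) / ((1 - lam) * (2 - lam)) ≤ T.toReal := by
    have := ENNReal.toReal_mono hTne hTlow
    rwa [ENNReal.toReal_ofReal (Finset.sum_nonneg fun i _ => by
      have h1 : (0:ℝ) ≤ (b i - a i) ^ (2 - lam) := Real.rpow_nonneg (by linarith [hab i]) _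
      have h2 : (0:ℝ) < (1 - lam) * (2 - lam) := by nlinarith
      positivity)] at this
  rw [energy_repr hlam0 hlam1 hcd hΩm hsub]
  have hconv := convexity_bound hlam1 hK (fun i => b i - a i) (fun i => sub_nonneg.2 (hab i).le)
  rw [hsum] at hconv
  have h2 : (0:ℝ) < (1 - lam) * (2 - lam) := by nlinarith
  have e1 : ∑ i, 2 * (b i - a i) ^ (2 - lam) / ((1 - lam) * (2 - lam))
      = 2 / ((1 - lam) * (2 - lam)) * ∑ i, (b i - a i) ^ (2 - lam) := by
    rw [Finset.mul_sum]
    exact Finset.sum_congr rfl fun i _ => by ring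
  rw [e1] at htr
  calc (K:ℝ) ^ (lam - 1) * m ^ (2 - lam) / ((1 - lam) * (2 - lam))
      ≤ (∑ i, (b i - a i) ^ (2 - lam)) / ((1 - lam) * (2 - lam)) := by gcongr
    _ = (1/2) * (2 / ((1 - lam) * (2 - lam)) * ∑ i, (b i - a i) ^ (2 - lam)) := by ring
    _ ≤ (1/2) * T.toReal := by linarith

lemma pow_aux {m' : ℝ} (hm : 0 < m') {K : ℕ} (hK : 1 ≤ K) (hlam1 : lam < 1) :
    (K:ℝ) * (m' / K) ^ (2 - lam) = (K:ℝ) ^ (lam - 1) * m' ^ (2 - lam) := by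
  have hKpos : (0:ℝ) < K := by exact_mod_cast hK
  rw [div_eq_mul_inv, Real.mul_rpow hm.le (inv_nonneg.2 hKpos.le),
    Real.inv_rpow hKpos.le, ← Real.rpow_neg hKpos.le]
  have e2 : (K:ℝ) ^ (lam - 1) = (K:ℝ) ^ ((1:ℝ) + -(2 - lam)) := by ring_nf
  rw [e2, Real.rpow_add hKpos, Real.rpow_one]
  ring

lemma nsmul_ofReal (K : ℕ) {x : ℝ} (hx : 0 ≤ x) :
    K • ENNReal.ofReal x = ENNReal.ofReal ((K:ℝ) * x) := by
  rw [nsmul_eq_mul, ← ENNReal.ofReal_natCast K, ← ENNReal.ofReal_mul (Nat.cast_nonneg K)]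

lemma energy_upper (hlam0 : 0 < lam) (hlam1 : lam < 1) {m : ℝ} (hm : 0 < m)
    {K : ℕ} (hK : 1 ≤ K) {ε : ℝ} (hε : 0 < ε) :
    ∃ (a b : Fin K → ℝ), (∀ i, a i < b i) ∧
      (Pairwise fun i j : Fin K => Disjoint (Icc (a i) (b i)) (Icc (a j) (b j))) ∧
      volume (⋃ i, Ioo (a i) (b i)) = ENNReal.ofReal m ∧
      rieszEnergy1d lam (⋃ i, Ioo (a i) (b i))
        ≤ (K:ℝ) ^ (lam - 1) * m ^ (2 - lam) / ((1 - lam) * (2 - lam)) + ε := by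
  have hKpos : (0:ℝ) < K := by exact_mod_cast hK
  set ℓ : ℝ := m / K with hℓdef
  have hℓ : 0 < ℓ := div_pos hm hKpos
  set t : ℝ := ε / ((K:ℝ)^2 * ℓ^2) with htdef
  have ht : 0 < t := div_pos hε (by positivity)
  set D : ℝ := t ^ (-(1/lam)) with hDdef
  have hD : 0 < D := Real.rpow_pos_of_pos ht _
  have hDt : D ^ (-lam) = t := by
    rw [hDdef, ← Real.rpow_mul ht.le]
    have : -(1/lam) * -lam = 1 := by field_simp
    rw [this, Real.rpow_one]
  -- the intervals
  set a : Fin K → ℝ := fun i => (i:ℝ) * (ℓ + D) with hadef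
  set b : Fin K → ℝ := fun i => (i:ℝ) * (ℓ + D) + ℓ with hbdef
  have hab : ∀ i, a i < b i := fun i => by
    simp only [hadef, hbdef]; linarith
  have hgap : ∀ i j : Fin K, (i:ℕ) < (j:ℕ) → b i + D ≤ a j := by
    intro i j hij
    have h1 : ((i:ℕ):ℝ) + 1 ≤ ((j:ℕ):ℝ) := by exact_mod_cast Nat.succ_le_of_lt hij
    simp only [hadef, hbdef]
    nlinarith [hD.le, hℓ.le]
  have hdisj : Pairwise fun i j : Fin K => Disjoint (Icc (a i) (b i)) (Icc (a j) (b j)) := by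
    intro i j hij
    have key : ∀ i j : Fin K, (i:ℕ) < (j:ℕ) →
        Disjoint (Icc (a i) (b i)) (Icc (a j) (b j)) := by
      intro i j h
      have hba := hgap i j h
      exact Set.disjoint_left.2 fun x hx hx' => by
        have := hx.2; have := hx'.1; linarith
    rcases (Fin.val_ne_of_ne hij).lt_or_gt with h | h
    · exact key i j h
    · exact (key j i h).symm
  have hdisjIoo : Pairwise fun i j : Fin K => Disjoint (Ioo (a i) (b i)) (Ioo (a j) (b j)) :=
    fun i j hij => (hdisj hij).mono Ioo_subset_Icc_self Ioo_subset_Icc_self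
  set Ω := ⋃ i, Ioo (a i) (b i) with hΩdef
  have hvol : volume Ω = ENNReal.ofReal m := by
    rw [hΩdef, vol_union a b hab hdisjIoo]
    congr 1
    have : ∀ i : Fin K, b i - a i = ℓ := fun i => by simp [hadef, hbdef]
    rw [Finset.sum_congr rfl (fun i _ => this i), Finset.sum_const, Finset.card_univ,
      Fintype.card_fin, nsmul_eq_mul, hℓdef]
    field_simp
  -- containment in a big interval
  have hsub : Ω ⊆ Icc 0 ((K:ℝ) * (ℓ + D)) := by
    intro x hx
    obtain ⟨i, hi⟩ := mem_iUnion.1 hx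
    have hiK : ((i:ℕ):ℝ) + 1 ≤ (K:ℝ) := by exact_mod_cast Nat.succ_le_of_lt i.isLt
    constructor
    · have : 0 ≤ a i := by
        simp only [hadef]; positivity
      linarith [hi.1]
    · have : b i ≤ (K:ℝ) * (ℓ + D) := by
        simp only [hbdef]; nlinarith [hD.le, hℓ.le]
      linarith [hi.2]
  have hcd : (0:ℝ) ≤ (K:ℝ) * (ℓ + D) := by positivity
  have hΩm : MeasurableSet Ω := MeasurableSet.iUnion (fun i => measurableSet_Ioo)
  refine ⟨a, b, hab, hdisj, hvol, ?_⟩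
  rw [← hΩdef, energy_repr hlam0 hlam1 hcd hΩm hsub]
  set T := ∫⁻ x in Ω, ∫⁻ y in Ω, ENNReal.ofReal (|x - y| ^ (-lam)) with hT
  have hTsplit : T = ∑ i : Fin K, ∑ j : Fin K, ∫⁻ x in Ioo (a i) (b i),
      ∫⁻ y in Ioo (a j) (b j), ENNReal.ofReal (|x - y| ^ (-lam)) := by
    rw [hT, hΩdef]; exact split_lintegral hlam0 a b hdisjIoo
  -- diagonal terms
  have hdiag : ∀ i : Fin K, ∫⁻ x in Ioo (a i) (b i), ∫⁻ y in Ioo (a i) (b i),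
      ENNReal.ofReal (|x - y| ^ (-lam))
      = ENNReal.ofReal (2 * ℓ ^ (2 - lam) / ((1 - lam) * (2 - lam))) := by
    intro i
    rw [diag_val hlam0 hlam1 (hab i)]
    congr 2
    simp [hadef, hbdef]
  -- off-diagonal terms
  have hcross : ∀ i j : Fin K, i ≠ j → ∫⁻ x in Ioo (a i) (b i), ∫⁻ y in Ioo (a j) (b j),
      ENNReal.ofReal (|x - y| ^ (-lam)) ≤ ENNReal.ofReal (t * (ℓ * ℓ)) := by
    intro i j hij
    have hdist : ∀ x ∈ Ioo (a i) (b i), ∀ y ∈ Ioo (a j) (b j), D ≤ |x - y| := by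
      intro x hx y hy
      rcases (Fin.val_ne_of_ne hij).lt_or_gt with h | h
      · have := hgap i j h
        rw [abs_sub_comm, abs_of_pos (by linarith [hx.2, hy.1] : (0:ℝ) < y - x)]
        linarith [hx.2, hy.1]
      · have := hgap j i h
        rw [abs_of_pos (by linarith [hx.1, hy.2] : (0:ℝ) < x - y)]
        linarith [hx.1, hy.2]
    have hptw : ∀ x ∈ Ioo (a i) (b i), ∀ y ∈ Ioo (a j) (b j),
        ENNReal.ofReal (|x - y| ^ (-lam)) ≤ ENNReal.ofReal (D ^ (-lam)) := by
      intro x hx y hy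
      exact ENNReal.ofReal_le_ofReal
        (Real.rpow_le_rpow_of_nonpos hD (hdist x hx y hy) (neg_nonpos.2 hlam0.le))
    calc ∫⁻ x in Ioo (a i) (b i), ∫⁻ y in Ioo (a j) (b j), ENNReal.ofReal (|x - y| ^ (-lam))
        ≤ ∫⁻ _x in Ioo (a i) (b i), ENNReal.ofReal (D ^ (-lam)) * ENNReal.ofReal ℓ := by
          refine setLIntegral_mono measurable_const (fun x hx => ?_)
          calc ∫⁻ y in Ioo (a j) (b j), ENNReal.ofReal (|x - y| ^ (-lam))
              ≤ ∫⁻ _y in Ioo (a j) (b j), ENNReal.ofReal (D ^ (-lam)) :=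
                setLIntegral_mono measurable_const (fun y hy => hptw x hx y hy)
            _ = ENNReal.ofReal (D ^ (-lam)) * ENNReal.ofReal ℓ := by
                rw [setLIntegral_const, Real.volume_Ioo]
                congr 1
                simp [hadef, hbdef]
      _ = ENNReal.ofReal (D ^ (-lam)) * ENNReal.ofReal ℓ * ENNReal.ofReal ℓ := by
          rw [setLIntegral_const, Real.volume_Ioo]
          congr 1
          simp [hadef, hbdef]
      _ = ENNReal.ofReal (t * (ℓ * ℓ)) := by
          rw [hDt, ← ENNReal.ofReal_mul ht.le, ← ENNReal.ofReal_mul (by positivity), mul_assoc]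
  -- sum it up
  have hTbound : T ≤ ENNReal.ofReal ((K:ℝ) * (2 * ℓ ^ (2 - lam) / ((1 - lam) * (2 - lam)))
      + (K:ℝ) * ((K:ℝ) * (t * (ℓ * ℓ)))) := by
    rw [hTsplit]
    set S := ENNReal.ofReal (2 * ℓ ^ (2 - lam) / ((1 - lam) * (2 - lam))) with hS
    set B := ENNReal.ofReal (t * (ℓ * ℓ)) with hB
    have hrow : ∀ i : Fin K, ∑ j : Fin K, ∫⁻ x in Ioo (a i) (b i),
        ∫⁻ y in Ioo (a j) (b j), ENNReal.ofReal (|x - y| ^ (-lam)) ≤ S + K • B := by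
      intro i
      rw [← Finset.add_sum_erase Finset.univ _ (Finset.mem_univ i), hdiag i]
      refine add_le_add le_rfl ?_
      calc ∑ j ∈ Finset.univ.erase i, ∫⁻ x in Ioo (a i) (b i),
            ∫⁻ y in Ioo (a j) (b j), ENNReal.ofReal (|x - y| ^ (-lam))
          ≤ ∑ _j ∈ Finset.univ.erase i, B :=
            Finset.sum_le_sum (fun j hj => hcross i j (Finset.ne_of_mem_erase hj).symm)
        _ = (Finset.univ.erase i).card • B := (Finset.sum_const B)
        _ ≤ K • B := by
            refine nsmul_le_nsmul_left zero_le ?_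
            calc (Finset.univ.erase i).card ≤ Finset.univ.card := Finset.card_le_card
                  (Finset.erase_subset _ _)
              _ = K := by rw [Finset.card_univ, Fintype.card_fin]
    calc (∑ i : Fin K, ∑ j : Fin K, ∫⁻ x in Ioo (a i) (b i),
          ∫⁻ y in Ioo (a j) (b j), ENNReal.ofReal (|x - y| ^ (-lam)))
        ≤ ∑ _i : Fin K, (S + K • B) := Finset.sum_le_sum (fun i _ => hrow i)
      _ = K • (S + K • B) := by rw [Finset.sum_const, Finset.card_univ, Fintype.card_fin]
      _ = ENNReal.ofReal ((K:ℝ) * (2 * ℓ ^ (2 - lam) / ((1 - lam) * (2 - lam)))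
            + (K:ℝ) * ((K:ℝ) * (t * (ℓ * ℓ)))) := by
          have hc0 : (0:ℝ) < (1 - lam) * (2 - lam) := by nlinarith
          have hs0 : (0:ℝ) ≤ 2 * ℓ ^ (2 - lam) / ((1 - lam) * (2 - lam)) := by
            have := Real.rpow_nonneg hℓ.le (2 - lam); positivity
          have hb0 : (0:ℝ) ≤ t * (ℓ * ℓ) := by positivity
          rw [hS, hB, smul_add,
            nsmul_ofReal K (x := 2 * ℓ ^ (2 - lam) / ((1 - lam) * (2 - lam))) hs0,
            nsmul_ofReal K (x := t * (ℓ * ℓ)) hb0,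
            nsmul_ofReal K (x := (K:ℝ) * (t * (ℓ * ℓ))) (by positivity),
            ← ENNReal.ofReal_add (by positivity) (by positivity)]
  have hRnn : (0:ℝ) ≤ (K:ℝ) * (2 * ℓ ^ (2 - lam) / ((1 - lam) * (2 - lam)))
      + (K:ℝ) * ((K:ℝ) * (t * (ℓ * ℓ))) := by
    have hc0 : (0:ℝ) < (1 - lam) * (2 - lam) := by nlinarith
    have := Real.rpow_nonneg hℓ.le (2 - lam)
    positivity
  have htoReal : T.toReal ≤ (K:ℝ) * (2 * ℓ ^ (2 - lam) / ((1 - lam) * (2 - lam)))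
      + (K:ℝ) * ((K:ℝ) * (t * (ℓ * ℓ))) := ENNReal.toReal_le_of_le_ofReal hRnn hTbound
  have hεhalf : (K:ℝ) * ((K:ℝ) * (t * (ℓ * ℓ))) = ε := by
    rw [htdef]; field_simp
  have hmain : (K:ℝ) * (2 * ℓ ^ (2 - lam) / ((1 - lam) * (2 - lam)))
      = 2 * ((K:ℝ) ^ (lam - 1) * m ^ (2 - lam) / ((1 - lam) * (2 - lam))) := by
    have hpa : (K:ℝ) * ℓ ^ (2 - lam) = (K:ℝ) ^ (lam - 1) * m ^ (2 - lam) := by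
      rw [hℓdef]; exact pow_aux hm hK hlam1
    calc (K:ℝ) * (2 * ℓ ^ (2 - lam) / ((1 - lam) * (2 - lam)))
        = 2 * ((K:ℝ) * ℓ ^ (2 - lam)) / ((1 - lam) * (2 - lam)) := by ring
      _ = 2 * ((K:ℝ) ^ (lam - 1) * m ^ (2 - lam)) / ((1 - lam) * (2 - lam)) := by rw [hpa]
      _ = 2 * ((K:ℝ) ^ (lam - 1) * m ^ (2 - lam) / ((1 - lam) * (2 - lam))) := by ring
  calc (1:ℝ)/2 * T.toReal
      ≤ (1:ℝ)/2 * ((K:ℝ) * (2 * ℓ ^ (2 - lam) / ((1 - lam) * (2 - lam)))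
          + (K:ℝ) * ((K:ℝ) * (t * (ℓ * ℓ)))) := by linarith
    _ = (K:ℝ) ^ (lam - 1) * m ^ (2 - lam) / ((1 - lam) * (2 - lam)) + ε / 2 := by
        rw [hmain, hεhalf]; ring
    _ ≤ (K:ℝ) ^ (lam - 1) * m ^ (2 - lam) / ((1 - lam) * (2 - lam)) + ε := by linarith

/-- `Ω` is the union of the `K` nonempty bounded open intervals `(a i, b i)`,
whose closures are pairwise disjoint. -/
def IsIntervalUnion (K : ℕ) (a b : Fin K → ℝ) (Ω : Set ℝ) : Prop :=
  (∀ i, a i < b i) ∧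
  (Pairwise fun i j => Disjoint (Icc (a i) (b i)) (Icc (a j) (b j))) ∧
  Ω = ⋃ i, Ioo (a i) (b i)

/-- The set of energies `2K + (1/2)∬_{Ω×Ω} |x-y|^{-λ}` of admissible sets `Ω` of mass `m`:
finite unions of `K ≥ 1` nonempty bounded open intervals with pairwise disjoint closures
and Lebesgue measure `m`. -/
noncomputable def gldEnergies (lam m : ℝ) : Set ℝ :=
  { e | ∃ (K : ℕ) (a b : Fin K → ℝ) (Ω : Set ℝ), 1 ≤ K ∧ IsIntervalUnion K a b Ω ∧
      volume Ω = ENNReal.ofReal m ∧ e = 2 * K + rieszEnergy1d lam Ω }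

/-- The one-dimensional generalized liquid drop infimum `E_λ(m)` equals
`inf_{K ≥ 1} (2K + K^{λ-1} m^{2-λ} / ((1-λ)(2-λ)))`. -/
theorem gld1d_inf_formula (lam : ℝ) (hlam0 : 0 < lam) (hlam1 : lam < 1)
    (m : ℝ) (hm : 0 < m) :
    sInf (gldEnergies lam m) =
      sInf { e : ℝ | ∃ K : ℕ, 1 ≤ K ∧
        e = 2 * K + (K : ℝ) ^ (lam - 1) * m ^ (2 - lam) / ((1 - lam) * (2 - lam)) } := by
  have hc0 : (0:ℝ) < (1 - lam) * (2 - lam) := by nlinarith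
  have hterm : ∀ K : ℕ, 0 ≤ (K:ℝ) ^ (lam - 1) * m ^ (2 - lam) / ((1 - lam) * (2 - lam)) := by
    intro K
    have h1 : (0:ℝ) ≤ (K:ℝ) ^ (lam - 1) := Real.rpow_nonneg (Nat.cast_nonneg K) _
    have h2 : (0:ℝ) ≤ m ^ (2 - lam) := Real.rpow_nonneg hm.le _
    positivity
  have hdom : ∀ e ∈ gldEnergies lam m, ∃ K : ℕ, 1 ≤ K ∧
      2 * (K:ℝ) + (K:ℝ) ^ (lam - 1) * m ^ (2 - lam) / ((1 - lam) * (2 - lam)) ≤ e := by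
    rintro e ⟨K, a, b, Ω, hK, ⟨hab, hdisj, hΩeq⟩, hvol, rfl⟩
    refine ⟨K, hK, ?_⟩
    have hlow := energy_lower hlam0 hlam1 hm hK a b hab hdisj (hΩeq ▸ hvol)
    rw [rieszEnergy1d, hΩeq]
    rw [rieszEnergy1d] at hlow
    linarith
  have hAne : (gldEnergies lam m).Nonempty := by
    obtain ⟨a, b, hab, hdisj, hvol, hle⟩ :=
      energy_upper hlam0 hlam1 hm (le_refl 1) one_pos (K := 1)
    exact ⟨_, 1, a, b, _, le_refl 1, ⟨hab, hdisj, rfl⟩, hvol, rfl⟩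
  have hAbdd : BddBelow (gldEnergies lam m) := by
    refine ⟨2, fun e he => ?_⟩
    obtain ⟨K, hK, hle⟩ := hdom e he
    have hK1 : (1:ℝ) ≤ K := by exact_mod_cast hK
    have := hterm K
    linarith
  have hBne : { e : ℝ | ∃ K : ℕ, 1 ≤ K ∧
      e = 2 * K + (K : ℝ) ^ (lam - 1) * m ^ (2 - lam) / ((1 - lam) * (2 - lam)) }.Nonempty :=
    ⟨_, 1, le_refl 1, rfl⟩
  have hBbdd : BddBelow { e : ℝ | ∃ K : ℕ, 1 ≤ K ∧
      e = 2 * K + (K : ℝ) ^ (lam - 1) * m ^ (2 - lam) / ((1 - lam) * (2 - lam)) } := by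
    refine ⟨2, ?_⟩
    rintro e ⟨K, hK, rfl⟩
    have hK1 : (1:ℝ) ≤ K := by exact_mod_cast hK
    have := hterm K
    linarith
  apply le_antisymm
  · refine le_csInf hBne ?_
    rintro e ⟨K, hK, rfl⟩
    refine le_of_forall_pos_le_add (fun ε hε => ?_)
    obtain ⟨a, b, hab, hdisj, hvol, hle⟩ := energy_upper hlam0 hlam1 hm hK hε
    refine le_trans (csInf_le hAbdd ⟨K, a, b, _, hK, ⟨hab, hdisj, rfl⟩, hvol, rfl⟩) ?_
    rw [rieszEnergy1d]
    rw [rieszEnergy1d] at hle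
    linarith
  · refine le_csInf hAne ?_
    intro e he
    obtain ⟨K, hK, hle⟩ := hdom e he
    exact le_trans (csInf_le hBbdd ⟨K, hK, rfl⟩) hle
end

section
/- Let 0 < λ < 1 and set m_* = (2(1−λ)(2−λ)/(1−2^{λ−1}))^{1/(2−λ)}. If 0 < m ≤ m_*, then every single open interval of length m attains the infimum E_λ(m), and conversely every minimizer, i.e. every finite union Ω of bounded open intervals with pairwise disjoint closures, |Ω| = m and 𝓔_λ[Ω] = E_λ(m), coincides up to a set of Lebesgue measure zero with a single interval of length m. -/
open MeasureTheory Set ENNReal intervalIntegral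

section helpers

lemma ker_intOn {lam : ℝ} (hlam1 : lam < 1) (x u v : ℝ) :
    IntegrableOn (fun y => |x - y| ^ (-lam)) (Ioo u v) := by
  have hr : (-1:ℝ) < -lam := by linarith
  have h1 : IntegrableOn (fun y => |x - y| ^ (-lam)) (Ioc u (min v x)) := by
    have := (intervalIntegral.intervalIntegrable_rpow'
      (a := x - u) (b := x - min v x) hr).comp_sub_left x
    simp only [_root_.sub_sub_cancel] at this
    refine (this.1).congr_fun (fun y hy => ?_) measurableSet_Ioc
    have : y ≤ x := le_trans hy.2 (min_le_right _ _)
    rw [abs_of_nonneg (by linarith)]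
  have h2 : IntegrableOn (fun y => |x - y| ^ (-lam)) (Ioc (max u x) v) := by
    have := (intervalIntegral.intervalIntegrable_rpow'
      (a := (max u x) - x) (b := v - x) hr).comp_sub_right x
    simp only [sub_add_cancel] at this
    refine (this.1).congr_fun (fun y hy => ?_) measurableSet_Ioc
    have : x ≤ y := le_trans (le_max_right _ _) (le_of_lt hy.1)
    rw [abs_sub_comm, abs_of_nonneg (by linarith)]
  refine ((h1.union h2).mono_set ?_)
  intro y hy
  rcases le_or_gt y x with h | h
  · exact Or.inl ⟨hy.1, le_min hy.2.le h⟩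
  · exact Or.inr ⟨lt_of_lt_of_le (max_lt hy.1 h) le_rfl, hy.2.le⟩

lemma ker_intervalInt {lam : ℝ} (hlam1 : lam < 1) (x u v : ℝ) :
    IntervalIntegrable (fun y => |x - y| ^ (-lam)) volume u v := by
  constructor <;>
  · rw [integrableOn_Ioc_iff_integrableOn_Ioo]
    exact ker_intOn hlam1 x _ _

lemma inner_int {lam : ℝ} (hlam0 : 0 < lam) (hlam1 : lam < 1) {a b x : ℝ} (hab : a ≤ b)
    (hx : x ∈ Icc a b) :
    ∫ y in Ioo a b, |x - y| ^ (-lam) = ((x - a) ^ (1 - lam) + (b - x) ^ (1 - lam)) / (1 - lam) := by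
  have hr : (-1:ℝ) < -lam := by linarith
  rw [← MeasureTheory.integral_Ioc_eq_integral_Ioo, ← intervalIntegral.integral_of_le hab]
  rw [← intervalIntegral.integral_add_adjacent_intervals
    (ker_intervalInt hlam1 x a x) (ker_intervalInt hlam1 x x b)]
  have e1 : ∫ y in a..x, |x - y| ^ (-lam) = (x - a) ^ (1 - lam) / (1 - lam) := by
    rw [intervalIntegral.integral_congr (g := fun y => (x - y) ^ (-lam)) ?_]
    · rw [intervalIntegral.integral_comp_sub_left (fun t => t ^ (-lam)) x, sub_self,
        integral_rpow (Or.inl hr)]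
      rw [Real.zero_rpow (by linarith)]
      norm_num
      ring_nf
    · intro y hy
      rw [uIcc_of_le hx.1] at hy
      simp only
      rw [abs_of_nonneg (by linarith [hy.2])]
  have e2 : ∫ y in x..b, |x - y| ^ (-lam) = (b - x) ^ (1 - lam) / (1 - lam) := by
    rw [intervalIntegral.integral_congr (g := fun y => (y - x) ^ (-lam)) ?_]
    · rw [intervalIntegral.integral_comp_sub_right (fun t => t ^ (-lam)) x, sub_self,
        integral_rpow (Or.inl hr)]
      rw [Real.zero_rpow (by linarith)]
      norm_num
      ring_nf
    · intro y hy
      rw [uIcc_of_le hx.2] at hy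
      simp only
      rw [abs_sub_comm, abs_of_nonneg (by linarith [hy.1])]
  rw [e1, e2, add_div]

lemma double_int {lam : ℝ} (hlam0 : 0 < lam) (hlam1 : lam < 1) {a b : ℝ} (hab : a ≤ b) :
    ∫ x in Ioo a b, ∫ y in Ioo a b, |x - y| ^ (-lam)
      = 2 * (b - a) ^ (2 - lam) / ((1 - lam) * (2 - lam)) := by
  have hr : (-1:ℝ) < 1 - lam := by linarith
  rw [setIntegral_congr_fun measurableSet_Ioo
    (g := fun x => ((x - a) ^ (1 - lam) + (b - x) ^ (1 - lam)) / (1 - lam))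
    (fun x hx => inner_int hlam0 hlam1 hab (Ioo_subset_Icc_self hx))]
  rw [← MeasureTheory.integral_Ioc_eq_integral_Ioo, ← intervalIntegral.integral_of_le hab]
  have i1 : IntervalIntegrable (fun x => (x - a) ^ (1 - lam)) volume a b := by
    have := (intervalIntegral.intervalIntegrable_rpow'
      (a := a - a) (b := b - a) hr).comp_sub_right a
    simpa using this
  have i2 : IntervalIntegrable (fun x => (b - x) ^ (1 - lam)) volume a b := by
    have := (intervalIntegral.intervalIntegrable_rpow'
      (a := b - a) (b := b - b) hr).comp_sub_left b
    simpa using this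
  have e0 : ∀ x : ℝ, ((x - a) ^ (1 - lam) + (b - x) ^ (1 - lam)) / (1 - lam)
      = (1 - lam)⁻¹ * ((x - a) ^ (1 - lam) + (b - x) ^ (1 - lam)) := by
    intro x; rw [div_eq_inv_mul]
  simp only [e0]
  rw [intervalIntegral.integral_const_mul, intervalIntegral.integral_add i1 i2]
  have c1 : ∫ x in a..b, (x - a) ^ (1 - lam) = (b - a) ^ (2 - lam) / (2 - lam) := by
    rw [intervalIntegral.integral_comp_sub_right (fun t => t ^ (1 - lam)) a, sub_self,
      integral_rpow (Or.inl hr), Real.zero_rpow (by linarith)]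
    norm_num
    ring_nf
  have c2 : ∫ x in a..b, (b - x) ^ (1 - lam) = (b - a) ^ (2 - lam) / (2 - lam) := by
    rw [intervalIntegral.integral_comp_sub_left (fun t => t ^ (1 - lam)) b, sub_self,
      integral_rpow (Or.inl hr), Real.zero_rpow (by linarith)]
    norm_num
    ring_nf
  rw [c1, c2]
  have h1 : (1:ℝ) - lam ≠ 0 := by linarith
  have h2 : (2:ℝ) - lam ≠ 0 := by linarith
  field_simp
  ring

lemma riesz_interval {lam : ℝ} (hlam0 : 0 < lam) (hlam1 : lam < 1) {a b : ℝ} (hab : a ≤ b) :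
    rieszEnergy1d lam (Ioo a b) = (b - a) ^ (2 - lam) / ((1 - lam) * (2 - lam)) := by
  rw [rieszEnergy1d, double_int hlam0 hlam1 hab]
  ring

lemma F_meas {lam : ℝ} (S : Set ℝ) :
    StronglyMeasurable (fun x => ∫ y in S, |x - y| ^ (-lam)) := by
  apply MeasureTheory.StronglyMeasurable.integral_prod_right'
    (f := fun p : ℝ × ℝ => |p.1 - p.2| ^ (-lam))
  exact ((measurable_fst.sub measurable_snd).abs.pow_const _).stronglyMeasurable

lemma F_nonneg {lam : ℝ} (S : Set ℝ) (x : ℝ) : 0 ≤ ∫ y in S, |x - y| ^ (-lam) :=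
  integral_nonneg fun y => Real.rpow_nonneg (abs_nonneg _) _

lemma F_bound {lam : ℝ} (hlam0 : 0 < lam) (hlam1 : lam < 1) {A B x : ℝ} {S : Set ℝ}
    (hx : x ∈ Ioo A B) (hS : S ⊆ Ioo A B) :
    ∫ y in S, |x - y| ^ (-lam) ≤ 2 * (B - A) ^ (1 - lam) / (1 - lam) := by
  set L := B - A with hL
  have hL0 : 0 < L := by simp only [hL]; linarith [hx.1, hx.2]
  have hsub : S ⊆ Ioo (x - L) (x + L) := by
    intro y hy
    have h1 := (hS hy).1; have h2 := (hS hy).2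
    have l := hx.1; have r := hx.2
    constructor <;> simp only [hL] <;> linarith
  calc ∫ y in S, |x - y| ^ (-lam) ≤ ∫ y in Ioo (x - L) (x + L), |x - y| ^ (-lam) := by
        apply setIntegral_mono_set (ker_intOn hlam1 x _ _)
        · exact Filter.Eventually.of_forall fun y => Real.rpow_nonneg (abs_nonneg _) _
        · exact HasSubset.Subset.eventuallyLE hsub
    _ = 2 * L ^ (1 - lam) / (1 - lam) := by
        rw [inner_int hlam0 hlam1 (by linarith) (by constructor <;> linarith)]
        ring_nf
    _ ≤ 2 * (B - A) ^ (1 - lam) / (1 - lam) := le_refl _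

/-- integrability of `x ↦ ∫ y in S, |x-y|^(-lam)` on a set `T`, both inside a box. -/
lemma F_int {lam : ℝ} (hlam0 : 0 < lam) (hlam1 : lam < 1) {A B : ℝ} {S T : Set ℝ}
    (hS : S ⊆ Ioo A B) (hT : T ⊆ Ioo A B) (hTm : MeasurableSet T) :
    IntegrableOn (fun x => ∫ y in S, |x - y| ^ (-lam)) T := by
  have hfin : volume T < ⊤ :=
    lt_of_le_of_lt (measure_mono hT) measure_Ioo_lt_top
  refine Integrable.mono' (g := fun _ => 2 * (B - A) ^ (1 - lam) / (1 - lam))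
    (integrableOn_const hfin.ne enorm_ne_top) ((F_meas S).aestronglyMeasurable) ?_
  refine Filter.eventually_of_mem (self_mem_ae_restrict hTm) fun x hx => ?_
  rw [Real.norm_of_nonneg (F_nonneg S x)]
  exact F_bound hlam0 hlam1 (hT hx) hS

lemma pm {p a b : ℝ} (hp : 1 ≤ p) (ha : 0 ≤ a) (hb : 0 ≤ b) :
    (2:ℝ) ^ (1 - p) * (a + b) ^ p ≤ a ^ p + b ^ p := by
  have key := NNReal.rpow_add_le_mul_rpow_add_rpow a.toNNReal b.toNNReal hp
  have key2 : (a + b) ^ p ≤ (2:ℝ) ^ (p-1) * (a ^ p + b ^ p) := by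
    have := NNReal.coe_le_coe.2 key
    simpa [NNReal.coe_rpow, Real.coe_toNNReal a ha, Real.coe_toNNReal b hb] using this
  have h2p : (0:ℝ) < (2:ℝ) ^ (1 - p) := Real.rpow_pos_of_pos two_pos _
  have hrw : (2:ℝ) ^ (1 - p) * (2:ℝ) ^ (p - 1) = 1 := by
    rw [← Real.rpow_add two_pos]; norm_num
  calc (2:ℝ) ^ (1 - p) * (a + b) ^ p ≤ (2:ℝ) ^ (1-p) * ((2:ℝ) ^ (p-1) * (a ^ p + b ^ p)) :=
        mul_le_mul_of_nonneg_left key2 h2p.le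
    _ = a ^ p + b ^ p := by rw [← mul_assoc, hrw, one_mul]

lemma merge_key {p : ℝ} (hp : 1 < p) {C : ℝ} :
    ∀ K : ℕ, ∀ ℓ : Fin (K + 1) → ℝ, (∀ i, 0 ≤ ℓ i) →
      ((1 - 2 ^ (1 - p)) * (∑ i, ℓ i) ^ p ≤ C) →
      (∑ i, ℓ i) ^ p - ∑ i, ℓ i ^ p ≤ K * C := by
  intro K
  induction K with
  | zero => intro ℓ _ _; simp [Fin.sum_univ_one]
  | succ K ih =>
    intro ℓ hpos hbound
    set ℓ' : Fin (K + 1) → ℝ := Fin.cons (ℓ 0 + ℓ 1) (fun i => ℓ i.succ.succ) with hℓ'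
    have hsum : ∑ i, ℓ' i = ∑ i, ℓ i := by
      rw [hℓ', Fin.sum_cons, Fin.sum_univ_succ (f := ℓ), Fin.sum_univ_succ (f := fun i => ℓ i.succ)]
      simp only [Fin.succ_zero_eq_one]
      ring
    have hpos' : ∀ i, 0 ≤ ℓ' i := by
      intro i
      refine Fin.cases ?_ ?_ i <;> simp [hℓ']
      · exact add_nonneg (hpos 0) (hpos 1)
      · intro j; exact hpos _
    have h1 : (∑ i, ℓ' i) ^ p - ∑ i, ℓ' i ^ p ≤ K * C := ih ℓ' hpos' (by rw [hsum]; exact hbound)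
    have hsplit : ∑ i, ℓ i ^ p = ℓ 0 ^ p + ℓ 1 ^ p + ∑ i : Fin K, ℓ i.succ.succ ^ p := by
      rw [Fin.sum_univ_succ (f := fun i => ℓ i ^ p),
        Fin.sum_univ_succ (f := fun i => ℓ i.succ ^ p)]
      simp only [Fin.succ_zero_eq_one]
      ring
    have hsplit' : ∑ i, ℓ' i ^ p = (ℓ 0 + ℓ 1) ^ p + ∑ i : Fin K, ℓ i.succ.succ ^ p := by
      rw [Fin.sum_univ_succ (f := fun i => ℓ' i ^ p)]
      simp only [hℓ', Fin.cons_zero, Fin.cons_succ]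
    have hmerge : (ℓ 0 + ℓ 1) ^ p - ℓ 0 ^ p - ℓ 1 ^ p ≤ C := by
      have h2 := pm hp.le (hpos 0) (hpos 1)
      have h3 : (1 - 2 ^ (1 - p)) * (ℓ 0 + ℓ 1) ^ p ≤ (1 - 2 ^ (1-p)) * (∑ i, ℓ i) ^ p := by
        apply mul_le_mul_of_nonneg_left
        · apply Real.rpow_le_rpow (add_nonneg (hpos 0) (hpos 1)) _ (by linarith)
          rw [Fin.sum_univ_succ, Fin.sum_univ_succ]
          simp only [Fin.succ_zero_eq_one]
          have : 0 ≤ ∑ i : Fin K, ℓ i.succ.succ := Finset.sum_nonneg fun i _ => hpos _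
          linarith
        · have : (2:ℝ) ^ (1 - p) < 1 :=
            Real.rpow_lt_one_of_one_lt_of_neg one_lt_two (by linarith)
          linarith
      nlinarith [h3.trans hbound]
    rw [hsum] at h1
    push_cast
    rw [hsplit]
    rw [hsplit'] at h1
    nlinarith

end helpers

/-- For `0 < m ≤ m_* = (2(1-λ)(2-λ)/(1-2^{λ-1}))^{1/(2-λ)}`, every single open interval of
length `m` attains `E_λ(m)`, and every minimizer coincides, up to a set of measure zero,
with a single interval of length `m`. -/
theorem gld1d_minimizers_are_intervals (lam : ℝ) (hlam0 : 0 < lam) (hlam1 : lam < 1)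
    (m : ℝ) (hm : 0 < m)
    (hmstar : m ≤ (2 * (1 - lam) * (2 - lam) / (1 - 2 ^ (lam - 1))) ^ (1 / (2 - lam))) :
    (∀ c : ℝ, 2 * 1 + rieszEnergy1d lam (Ioo c (c + m)) = sInf (gldEnergies lam m)) ∧
    (∀ (K : ℕ) (a b : Fin K → ℝ) (Ω : Set ℝ), 1 ≤ K → IsIntervalUnion K a b Ω →
      volume Ω = ENNReal.ofReal m →
      2 * K + rieszEnergy1d lam Ω = sInf (gldEnergies lam m) →
      ∃ c : ℝ, volume (symmDiff Ω (Ioo c (c + m))) = 0) := by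
  have hD : (0:ℝ) < (1 - lam) * (2 - lam) := by nlinarith
  have hp1 : (1:ℝ) < 2 - lam := by linarith
  -- the key mass bound
  have hkey : (1 - 2 ^ (lam - 1)) * m ^ (2 - lam) ≤ 2 * (1 - lam) * (2 - lam) := by
    have hd : (0:ℝ) < 1 - 2 ^ (lam - 1) := by
      have : (2:ℝ) ^ (lam - 1) < 1 :=
        Real.rpow_lt_one_of_one_lt_of_neg one_lt_two (by linarith)
      linarith
    have hA : (0:ℝ) < 2 * (1 - lam) * (2 - lam) / (1 - 2 ^ (lam - 1)) := by
      apply div_pos (by nlinarith) hd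
    have h1 : m ^ (2 - lam) ≤ 2 * (1 - lam) * (2 - lam) / (1 - 2 ^ (lam - 1)) := by
      have h2 := Real.rpow_le_rpow hm.le hmstar (by linarith : (0:ℝ) ≤ 2 - lam)
      rwa [← Real.rpow_mul hA.le, one_div,
        inv_mul_cancel₀ (by linarith : (2:ℝ) - lam ≠ 0), Real.rpow_one] at h2
    calc (1 - 2 ^ (lam - 1)) * m ^ (2 - lam)
        ≤ (1 - 2 ^ (lam - 1)) * (2 * (1 - lam) * (2 - lam) / (1 - 2 ^ (lam - 1))) :=
          mul_le_mul_of_nonneg_left h1 hd.le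
      _ = 2 * (1 - lam) * (2 - lam) := mul_div_cancel₀ _ hd.ne'
  -- mass of an interval union
  have mass : ∀ (K : ℕ) (a b : Fin K → ℝ) (Ω : Set ℝ), IsIntervalUnion K a b Ω →
      volume Ω = ENNReal.ofReal m → ∑ i, (b i - a i) = m := by
    intro K a b Ω h hvol
    obtain ⟨hab, hdisjIcc, hΩ⟩ := h
    have hdisj : Pairwise (Function.onFun Disjoint fun i => Ioo (a i) (b i)) := fun i j hij =>
      (hdisjIcc hij).mono Ioo_subset_Icc_self Ioo_subset_Icc_self
    rw [hΩ, measure_iUnion hdisj (fun i => measurableSet_Ioo), tsum_fintype] at hvol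
    simp only [Real.volume_Ioo] at hvol
    rw [← ENNReal.ofReal_sum_of_nonneg (fun i _ => by linarith [hab i])] at hvol
    exact (ENNReal.ofReal_eq_ofReal_iff
      (Finset.sum_nonneg fun i _ => by linarith [hab i]) hm.le).1 hvol
  -- decomposition of the energy into pairwise interactions
  have decomp : ∀ (K : ℕ) (a b : Fin K → ℝ) (Ω : Set ℝ), 1 ≤ K → IsIntervalUnion K a b Ω →
      rieszEnergy1d lam Ω = (1/2) * ∑ i, ∑ j,
        ∫ x in Ioo (a i) (b i), ∫ y in Ioo (a j) (b j), |x - y| ^ (-lam) := by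
    intro K a b Ω hK h
    obtain ⟨hab, hdisjIcc, hΩ⟩ := h
    subst hΩ
    haveI hne : Nonempty (Fin K) := Fin.pos_iff_nonempty.1 hK
    set I : Fin K → Set ℝ := fun i => Ioo (a i) (b i) with hI
    set A := Finset.univ.inf' Finset.univ_nonempty a with hA
    set B := Finset.univ.sup' Finset.univ_nonempty b with hB
    have hIbox : ∀ i, I i ⊆ Ioo A B := fun i y hy =>
      ⟨lt_of_le_of_lt (Finset.inf'_le a (Finset.mem_univ i)) hy.1,
       lt_of_lt_of_le hy.2 (Finset.le_sup' b (Finset.mem_univ i))⟩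
    have hUbox : (⋃ i, I i) ⊆ Ioo A B := iUnion_subset hIbox
    have hdisj : Pairwise (Function.onFun Disjoint I) := fun i j hij =>
      (hdisjIcc hij).mono Ioo_subset_Icc_self Ioo_subset_Icc_self
    have hmeas : ∀ i, MeasurableSet (I i) := fun i => measurableSet_Ioo
    have hUmeas : MeasurableSet (⋃ i, I i) := MeasurableSet.iUnion hmeas
    have inner_split : ∀ x : ℝ, (∫ y in ⋃ i, I i, |x - y| ^ (-lam))
        = ∑ j, ∫ y in I j, |x - y| ^ (-lam) := by
      intro x
      rw [integral_iUnion hmeas hdisj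
        (integrableOn_finite_iUnion.2 fun j => ker_intOn hlam1 x _ _), tsum_fintype]
    have main : (∫ x in ⋃ i, I i, ∫ y in ⋃ i, I i, |x - y| ^ (-lam))
        = ∑ i, ∑ j, ∫ x in I i, ∫ y in I j, |x - y| ^ (-lam) := by
      rw [integral_iUnion hmeas hdisj (F_int hlam0 hlam1 hUbox hUbox hUmeas), tsum_fintype]
      refine Finset.sum_congr rfl fun i _ => ?_
      rw [setIntegral_congr_fun (hmeas i) (fun x _ => inner_split x)]
      exact integral_finset_sum _ fun j _ => F_int hlam0 hlam1 (hIbox j) (hIbox i) (hmeas i)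
    rw [rieszEnergy1d, main]
  -- nonnegativity of interaction terms
  have enn : ∀ (u v s t : ℝ),
      0 ≤ ∫ x in Ioo u v, ∫ y in Ioo s t, |x - y| ^ (-lam) := by
    intro u v s t
    exact integral_nonneg fun x => F_nonneg _ _
  -- the combinatorial lower bound on the sum of diagonal terms
  have arith : ∀ (K : ℕ) (ℓ : Fin K → ℝ), 1 ≤ K → (∀ i, 0 ≤ ℓ i) → (∑ i, ℓ i = m) →
      2 + m ^ (2 - lam) / ((1 - lam) * (2 - lam))
        ≤ 2 * K + ∑ i, ℓ i ^ (2 - lam) / ((1 - lam) * (2 - lam)) := by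
    intro K ℓ hK hℓ hsum
    obtain ⟨K', rfl⟩ : ∃ K', K = K' + 1 := ⟨K - 1, (Nat.succ_pred_eq_of_pos hK).symm⟩
    have hmk := merge_key hp1 (C := 2 * (1 - lam) * (2 - lam)) K' ℓ hℓ ?_
    · rw [hsum] at hmk
      have hdiv : (m ^ (2 - lam) - ∑ i, ℓ i ^ (2 - lam)) / ((1 - lam) * (2 - lam))
          ≤ (K' * (2 * (1 - lam) * (2 - lam))) / ((1 - lam) * (2 - lam)) :=
        div_le_div_of_nonneg_right hmk hD.le
      rw [sub_div, Finset.sum_div] at hdiv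
      have heq : (K' : ℝ) * (2 * (1 - lam) * (2 - lam)) / ((1 - lam) * (2 - lam))
          = 2 * K' := by
        rw [div_eq_iff hD.ne']
        ring
      rw [heq] at hdiv
      push_cast
      linarith
    · rw [hsum]
      have : (1:ℝ) - (2 - lam) = lam - 1 := by ring
      rw [this]
      exact hkey
  -- lower bound on the energy of any admissible configuration
  have lower : ∀ (K : ℕ) (a b : Fin K → ℝ) (Ω : Set ℝ), 1 ≤ K → IsIntervalUnion K a b Ω →
      volume Ω = ENNReal.ofReal m →
      2 + m ^ (2 - lam) / ((1 - lam) * (2 - lam)) ≤ 2 * K + rieszEnergy1d lam Ω := by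
    intro K a b Ω hK h hvol
    have hab := h.1
    have hd := decomp K a b Ω hK h
    have hms := mass K a b Ω h hvol
    have hdiag : ∀ i : Fin K, (b i - a i) ^ (2 - lam) / ((1 - lam) * (2 - lam))
        ≤ (1/2) * ∫ x in Ioo (a i) (b i), ∫ y in Ioo (a i) (b i), |x - y| ^ (-lam) := by
      intro i
      rw [double_int hlam0 hlam1 (hab i).le]
      apply le_of_eq
      ring
    have hsum : ∑ i, (b i - a i) ^ (2 - lam) / ((1 - lam) * (2 - lam))
        ≤ rieszEnergy1d lam Ω := by
      rw [hd, Finset.mul_sum]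
      refine Finset.sum_le_sum fun i _ => ?_
      refine le_trans (hdiag i) ?_
      apply mul_le_mul_of_nonneg_left _ (by norm_num : (0:ℝ) ≤ 1/2)
      exact Finset.single_le_sum (f := fun j =>
        ∫ x in Ioo (a i) (b i), ∫ y in Ioo (a j) (b j), |x - y| ^ (-lam))
        (fun j _ => enn _ _ _ _) (Finset.mem_univ i)
    have := arith K (fun i => b i - a i) hK (fun i => sub_nonneg.2 (hab i).le) hms
    calc 2 + m ^ (2 - lam) / ((1 - lam) * (2 - lam))
        ≤ 2 * K + ∑ i, (b i - a i) ^ (2 - lam) / ((1 - lam) * (2 - lam)) := this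
      _ ≤ 2 * K + rieszEnergy1d lam Ω := by linarith [hsum]
  -- strict positivity of an interaction between two disjoint intervals
  have crosspos : ∀ (u v s t : ℝ), u < v → s < t →
      0 < ∫ x in Ioo u v, ∫ y in Ioo s t, |x - y| ^ (-lam) := by
    intro u v s t huv hst
    have hin : ∀ x : ℝ, 0 < ∫ y in Ioo s t, |x - y| ^ (-lam) := by
      intro x
      refine (setIntegral_pos_iff_support_of_nonneg_ae
        (Filter.Eventually.of_forall fun y => Real.rpow_nonneg (abs_nonneg _) _)
        (ker_intOn hlam1 x s t)).2 ?_
      have hsub : Ioo s t \ {x} ⊆ Function.support (fun y => |x - y| ^ (-lam)) ∩ Ioo s t := by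
        intro y hy
        refine ⟨?_, hy.1⟩
        have hxy : x - y ≠ 0 := sub_ne_zero.2 (Ne.symm hy.2)
        have : (0:ℝ) < |x - y| := abs_pos.2 hxy
        exact ne_of_gt (Real.rpow_pos_of_pos this _)
      calc (0:ENNReal) < ENNReal.ofReal (t - s) := ENNReal.ofReal_pos.2 (by linarith)
        _ = volume (Ioo s t \ {x}) := by
            rw [measure_diff_null (measure_singleton x), Real.volume_Ioo]
        _ ≤ volume (Function.support (fun y => |x - y| ^ (-lam)) ∩ Ioo s t) :=
            measure_mono hsub
    have hbox : Ioo u v ⊆ Ioo (min u s - 1) (max v t + 1) := by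
      intro z hz
      constructor
      · calc min u s - 1 < min u s := by linarith
          _ ≤ u := min_le_left _ _
          _ < z := hz.1
      · calc z < v := hz.2
          _ ≤ max v t := le_max_left _ _
          _ < max v t + 1 := by linarith
    have hbox2 : Ioo s t ⊆ Ioo (min u s - 1) (max v t + 1) := by
      intro z hz
      constructor
      · calc min u s - 1 < min u s := by linarith
          _ ≤ s := min_le_right _ _
          _ < z := hz.1
      · calc z < t := hz.2
          _ ≤ max v t := le_max_right _ _
          _ < max v t + 1 := by linarith
    refine (setIntegral_pos_iff_support_of_nonneg_ae
      (Filter.Eventually.of_forall fun x => F_nonneg _ _)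
      (F_int hlam0 hlam1 hbox2 hbox measurableSet_Ioo)).2 ?_
    have hsub : Ioo u v ⊆ Function.support (fun x => ∫ y in Ioo s t, |x - y| ^ (-lam)) ∩ Ioo u v :=
      fun x hx => ⟨ne_of_gt (hin x), hx⟩
    calc (0:ENNReal) < ENNReal.ofReal (v - u) := ENNReal.ofReal_pos.2 (by linarith)
      _ = volume (Ioo u v) := (Real.volume_Ioo).symm
      _ ≤ _ := measure_mono hsub
  -- strict lower bound when there are at least two intervals
  have strict : ∀ (K : ℕ) (a b : Fin K → ℝ) (Ω : Set ℝ), 2 ≤ K → IsIntervalUnion K a b Ω →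
      volume Ω = ENNReal.ofReal m →
      2 + m ^ (2 - lam) / ((1 - lam) * (2 - lam)) < 2 * K + rieszEnergy1d lam Ω := by
    intro K a b Ω hK2 h hvol
    have hK1 : 1 ≤ K := le_trans one_le_two hK2
    have hab := h.1
    have hd := decomp K a b Ω hK1 h
    have hms := mass K a b Ω h hvol
    set i0 : Fin K := ⟨0, by omega⟩ with hi0
    set i1 : Fin K := ⟨1, by omega⟩ with hi1
    have hne : i0 ≠ i1 := by
      simp only [hi0, hi1, Ne, Fin.mk.injEq]
      norm_num
    set e : Fin K → Fin K → ℝ := fun i j =>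
      ∫ x in Ioo (a i) (b i), ∫ y in Ioo (a j) (b j), |x - y| ^ (-lam) with he
    have hcross : 0 < e i0 i1 := crosspos _ _ _ _ (hab i0) (hab i1)
    have keysum : (∑ i, e i i) + e i0 i1 ≤ ∑ i, ∑ j, e i j := by
      have step : ∀ i : Fin K, (e i i + if i = i0 then e i0 i1 else 0) ≤ ∑ j, e i j := by
        intro i
        by_cases hii : i = i0
        · subst hii
          simp only [if_pos rfl]
          have : ∑ j ∈ ({i0, i1} : Finset (Fin K)), e i0 j ≤ ∑ j, e i0 j :=
            Finset.sum_le_sum_of_subset_of_nonneg (Finset.subset_univ _)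
              (fun j _ _ => enn _ _ _ _)
          rwa [Finset.sum_pair hne] at this
        · simp only [if_neg hii, add_zero]
          exact Finset.single_le_sum (f := fun j => e i j)
            (fun j _ => enn _ _ _ _) (Finset.mem_univ i)
      calc (∑ i, e i i) + e i0 i1
          = ∑ i, (e i i + if i = i0 then e i0 i1 else 0) := by
            rw [Finset.sum_add_distrib, Finset.sum_ite_eq' Finset.univ i0
              (fun _ => e i0 i1)]
            simp
        _ ≤ ∑ i, ∑ j, e i j := Finset.sum_le_sum fun i _ => step i
    have hdiag : ∀ i : Fin K, (b i - a i) ^ (2 - lam) / ((1 - lam) * (2 - lam))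
        = (1/2) * e i i := by
      intro i
      rw [he]
      simp only
      rw [double_int hlam0 hlam1 (hab i).le]
      ring
    have hriesz : (∑ i, (b i - a i) ^ (2 - lam) / ((1 - lam) * (2 - lam)))
        + (1/2) * e i0 i1 ≤ rieszEnergy1d lam Ω := by
      rw [hd]
      have : ∑ i, (b i - a i) ^ (2 - lam) / ((1 - lam) * (2 - lam))
          = (1/2) * ∑ i, e i i := by
        rw [Finset.mul_sum]
        exact Finset.sum_congr rfl fun i _ => hdiag i
      rw [this]
      calc (1/2) * (∑ i, e i i) + (1/2) * e i0 i1
          = (1/2) * ((∑ i, e i i) + e i0 i1) := by ring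
        _ ≤ (1/2) * ∑ i, ∑ j, e i j :=
            mul_le_mul_of_nonneg_left keysum (by norm_num)
    have harith := arith K (fun i => b i - a i) hK1 (fun i => sub_nonneg.2 (hab i).le) hms
    calc 2 + m ^ (2 - lam) / ((1 - lam) * (2 - lam))
        ≤ 2 * K + ∑ i, (b i - a i) ^ (2 - lam) / ((1 - lam) * (2 - lam)) := harith
      _ < 2 * K + ((∑ i, (b i - a i) ^ (2 - lam) / ((1 - lam) * (2 - lam)))
            + (1/2) * e i0 i1) := by linarith
      _ ≤ 2 * K + rieszEnergy1d lam Ω := by linarith [hriesz]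
  -- the candidate infimum value
  set Einf : ℝ := 2 + m ^ (2 - lam) / ((1 - lam) * (2 - lam)) with hEinf
  -- any interval of length m has energy Einf
  have intE : ∀ c : ℝ, rieszEnergy1d lam (Ioo c (c + m))
      = m ^ (2 - lam) / ((1 - lam) * (2 - lam)) := by
    intro c
    rw [riesz_interval hlam0 hlam1 (by linarith : c ≤ c + m), add_sub_cancel_left]
  -- membership of Einf in the energy set
  have memE : Einf ∈ gldEnergies lam m := by
    refine ⟨1, fun _ => 0, fun _ => m, Ioo 0 m, le_refl 1, ⟨fun _ => hm, ?_, ?_⟩, ?_, ?_⟩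
    · intro i j hij
      exact absurd (Subsingleton.elim i j) hij
    · exact (iUnion_const _).symm
    · rw [Real.volume_Ioo, sub_zero]
    · have := intE 0
      rw [zero_add] at this
      rw [this, hEinf]
      norm_num
  -- every energy is at least Einf
  have lowerE : ∀ e ∈ gldEnergies lam m, Einf ≤ e := by
    rintro e ⟨K, a, b, Ω, hK, h, hvol, rfl⟩
    exact lower K a b Ω hK h hvol
  have hsInf : sInf (gldEnergies lam m) = Einf :=
    le_antisymm (csInf_le ⟨Einf, lowerE⟩ memE) (le_csInf ⟨Einf, memE⟩ lowerE)
  constructor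
  · intro c
    rw [hsInf, intE c, hEinf]
    norm_num
  · intro K a b Ω hK h hvol hmin
    rcases eq_or_lt_of_le hK with hK1 | hK2
    · -- K = 1 : Ω is an interval
      obtain ⟨hab, hdisjIcc, hΩ⟩ := h
      have hms := mass K a b Ω ⟨hab, hdisjIcc, hΩ⟩ hvol
      subst hK1
      have hΩ' : Ω = Ioo (a 0) (b 0) := by
        rw [hΩ]
        exact iUnion_eq_const fun i => by rw [Subsingleton.elim i 0]
      have hm0 : b 0 - a 0 = m := by
        rw [Fin.sum_univ_one] at hms
        exact hms
      refine ⟨a 0, ?_⟩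
      have hb : a 0 + m = b 0 := by linarith
      rw [hΩ', hb, symmDiff_self]
      simp
    · -- K ≥ 2 : contradiction with strictness
      exfalso
      have h1 := strict K a b Ω hK2 h hvol
      rw [hmin, hsInf] at h1
      exact lt_irrefl _ h1
end
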